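/- arXiv:2506.24067 — 2 statements merged into one kernel-verified Lean document; each statement's English description precedes it below -/
import Mathlib

section
/- Let N ≥ 1, T > 0, and let A, B : [0, T] → Matrix (Fin N) (Fin N) ℂ be continuous. Suppose U, V : [0, T] → Matrix (Fin N) (Fin N) ℂ are differentiable with U′(t) = −A(t) · U(t) and V′(t) = −B(t) · V(t) for all t ∈ [0, T], U(T) = V(T) = Id, and U(t) is invertible for every t ∈ [0, T]. Then Id − U(0)⁻¹ · V(0) = ∫₀ᵀ U(t)⁻¹ · (A(t) − B(t)) · V(t) dt. In particular, if U(0) = V(0), then ∫₀ᵀ U(t)⁻¹ · (A(t) − B(t)) · V(t) dt = 0. -/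
open Matrix intervalIntegral Filter

attribute [local instance] Matrix.normedAddCommGroup Matrix.normedSpace

/-- Product rule for matrix-valued functions, proved entrywise. -/
theorem matrix_hasDerivWithinAt_mul {n : ℕ} {f g : ℝ → Matrix (Fin n) (Fin n) ℂ}
    {f' g' : Matrix (Fin n) (Fin n) ℂ} {s : Set ℝ} {t : ℝ}
    (hf : HasDerivWithinAt f f' s t) (hg : HasDerivWithinAt g g' s t) :
    HasDerivWithinAt (fun x => f x * g x) (f' * g t + f t * g') s t := by
  have hf1 : ∀ i j, HasDerivWithinAt (fun x => f x i j) (f' i j) s t := by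
    intro i j
    exact hasDerivWithinAt_pi.mp (hasDerivWithinAt_pi.mp hf i) j
  have hg1 : ∀ i j, HasDerivWithinAt (fun x => g x i j) (g' i j) s t := by
    intro i j
    exact hasDerivWithinAt_pi.mp (hasDerivWithinAt_pi.mp hg i) j
  apply hasDerivWithinAt_pi.mpr
  intro i
  apply hasDerivWithinAt_pi.mpr
  intro j
  have h1 : ∀ x, (f x * g x) i j = ∑ k, f x i k * g x k j := fun x => rfl
  simp only [h1]
  have h2 : (f' * g t + f t * g') i j
      = ∑ k, (f' i k * g t k j + f t i k * g' k j) := by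
    simp [Matrix.add_apply, Matrix.mul_apply, Finset.sum_add_distrib]
  rw [h2]
  exact HasDerivWithinAt.fun_sum fun k _ => (hf1 i k).mul (hg1 k j)

/-- Derivative of the pointwise inverse of a matrix-valued solution of `U' = -A U`. -/
theorem matrix_hasDerivWithinAt_inv {n : ℕ} {U : ℝ → Matrix (Fin n) (Fin n) ℂ}
    {A : Matrix (Fin n) (Fin n) ℂ} {s : Set ℝ} {t : ℝ} (ht : t ∈ s)
    (hd : HasDerivWithinAt U (-(A * U t)) s t)
    (hinv : ∀ x ∈ s, IsUnit (U x))
    (hcont : ContinuousWithinAt (fun x => (U x)⁻¹) s t) :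
    HasDerivWithinAt (fun x => (U x)⁻¹) ((U t)⁻¹ * A) s t := by
  have hdet : ∀ x ∈ s, IsUnit (U x).det := fun x hx =>
    (Matrix.isUnit_iff_isUnit_det _).mp (hinv x hx)
  have hUP : U t * (U t)⁻¹ = 1 := Matrix.mul_nonsing_inv _ (hdet t ht)
  refine hasDerivWithinAt_iff_tendsto_slope.mpr ?_
  have h1 : Tendsto (slope U t) (nhdsWithin t (s \ {t})) (nhds (-(A * U t))) :=
    hasDerivWithinAt_iff_tendsto_slope.mp hd
  have h2 : Tendsto (fun x => (U x)⁻¹) (nhdsWithin t (s \ {t})) (nhds ((U t)⁻¹)) :=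
    hcont.mono_left (nhdsWithin_mono _ Set.diff_subset)
  have h3 : Tendsto (fun y => (U y)⁻¹ * (-(slope U t y)) * (U t)⁻¹)
      (nhdsWithin t (s \ {t})) (nhds ((U t)⁻¹ * (A * U t) * (U t)⁻¹)) := by
    have := (h2.mul h1.neg).mul (tendsto_const_nhds (x := (U t)⁻¹))
    simpa using this
  have hval : (U t)⁻¹ * (A * U t) * (U t)⁻¹ = (U t)⁻¹ * A := by
    rw [← Matrix.mul_assoc, Matrix.mul_assoc ((U t)⁻¹ * A), hUP, Matrix.mul_one]
  rw [hval] at h3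
  refine h3.congr' ?_
  filter_upwards [self_mem_nhdsWithin] with y hy
  obtain ⟨hys, hyt⟩ := hy
  have hUy : (U y)⁻¹ * U y = 1 := Matrix.nonsing_inv_mul _ (hdet y hys)
  have key : (U y)⁻¹ - (U t)⁻¹ = (U y)⁻¹ * (U t - U y) * (U t)⁻¹ := by
    rw [Matrix.mul_sub, Matrix.sub_mul, Matrix.mul_assoc, hUP, Matrix.mul_one,
      hUy, Matrix.one_mul]
  have hs : slope (fun x => (U x)⁻¹) t y
      = (y - t)⁻¹ • ((U y)⁻¹ * (U t - U y) * (U t)⁻¹) := by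
    rw [slope_def_module, key]
  rw [hs, slope_def_module, ← smul_neg, neg_sub, mul_smul_comm, smul_mul_assoc]

/-- Integral form of the pseudo-linearization identity: if `U' + A U = 0`,
`V' + B V = 0`, `U T = V T = Id` and `U` is invertible, then
`Id - U(0)⁻¹ V(0) = ∫₀ᵀ U(t)⁻¹ (A(t) - B(t)) V(t) dt`; in particular equal scattering
data `U 0 = V 0` forces the integral to vanish. -/
theorem pseudo_linearization_integral_identity
    (N : ℕ) (hN : 1 ≤ N) (T : ℝ) (hT : 0 < T)
    (A B U V : ℝ → Matrix (Fin N) (Fin N) ℂ)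
    (hA : ContinuousOn A (Set.Icc 0 T))
    (hB : ContinuousOn B (Set.Icc 0 T))
    (hU : ∀ t ∈ Set.Icc (0 : ℝ) T,
      HasDerivWithinAt U (-(A t * U t)) (Set.Icc 0 T) t)
    (hV : ∀ t ∈ Set.Icc (0 : ℝ) T,
      HasDerivWithinAt V (-(B t * V t)) (Set.Icc 0 T) t)
    (hUT : U T = 1) (hVT : V T = 1)
    (hUinv : ∀ t ∈ Set.Icc (0 : ℝ) T, IsUnit (U t)) :
    (1 - (U 0)⁻¹ * V 0 = ∫ t in (0 : ℝ)..T, (U t)⁻¹ * (A t - B t) * V t) ∧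
      (U 0 = V 0 → (∫ t in (0 : ℝ)..T, (U t)⁻¹ * (A t - B t) * V t) = 0) := by
  have h0T : (0 : ℝ) ∈ Set.Icc (0 : ℝ) T := ⟨le_refl 0, hT.le⟩
  have hTT : T ∈ Set.Icc (0 : ℝ) T := ⟨hT.le, le_refl T⟩
  have hdet : ∀ t ∈ Set.Icc (0 : ℝ) T, IsUnit (U t).det := fun t ht =>
    (Matrix.isUnit_iff_isUnit_det _).mp (hUinv t ht)
  have hUcont : ContinuousOn U (Set.Icc 0 T) := fun t ht =>
    (hU t ht).continuousWithinAt
  have hVcont : ContinuousOn V (Set.Icc 0 T) := fun t ht =>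
    (hV t ht).continuousWithinAt
  have hPcont : ContinuousOn (fun x => (U x)⁻¹) (Set.Icc 0 T) := by
    intro t ht
    have hne : (U t).det ≠ 0 := (hdet t ht).ne_zero
    have hca : ContinuousAt Ring.inverse (U t).det := by
      rw [Ring.inverse_eq_inv']
      exact continuousAt_inv₀ hne
    exact (continuousAt_matrix_inv _ hca).comp_continuousWithinAt (hUcont t ht)
  -- derivative of W = U⁻¹ V
  have hW : ∀ t ∈ Set.Icc (0 : ℝ) T,
      HasDerivWithinAt (fun x => (U x)⁻¹ * V x)
        ((U t)⁻¹ * (A t - B t) * V t) (Set.Icc 0 T) t := by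
    intro t ht
    have hP : HasDerivWithinAt (fun x => (U x)⁻¹) ((U t)⁻¹ * A t) (Set.Icc 0 T) t :=
      matrix_hasDerivWithinAt_inv ht (hU t ht) hUinv (hPcont t ht)
    have := matrix_hasDerivWithinAt_mul hP (hV t ht)
    have heq : (U t)⁻¹ * A t * V t + (U t)⁻¹ * -(B t * V t)
        = (U t)⁻¹ * (A t - B t) * V t := by
      noncomm_ring
    rwa [heq] at this
  have hFcont : ContinuousOn (fun x => (U x)⁻¹ * V x) (Set.Icc 0 T) :=
    hPcont.mul hVcont
  have hfint : @IntervalIntegrable _ PseudoMetricSpace.toUniformSpace.toTopologicalSpace _ (fun t => (U t)⁻¹ * (A t - B t) * V t)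
      MeasureTheory.volume 0 T := by
    apply ContinuousOn.intervalIntegrable
    rw [Set.uIcc_of_le hT.le]
    exact (hPcont.mul (hA.sub hB)).mul hVcont
  have hftc : (∫ t in (0 : ℝ)..T, (U t)⁻¹ * (A t - B t) * V t)
      = (U T)⁻¹ * V T - (U 0)⁻¹ * V 0 := by
    apply intervalIntegral.integral_eq_sub_of_hasDeriv_right_of_le hT.le hFcont _ hfint
    intro x hx
    have hxI : x ∈ Set.Icc (0 : ℝ) T := Set.Ioo_subset_Icc_self hx
    refine (hW x hxI).mono_of_mem_nhdsWithin ?_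
    exact Icc_mem_nhdsGT_of_mem ⟨hx.1.le, hx.2⟩
  have hend : (U T)⁻¹ * V T = 1 := by
    rw [hUT, hVT]
    exact Matrix.nonsing_inv_mul 1 (by simp)
  rw [hend] at hftc
  constructor
  · exact hftc.symm
  · intro h
    have h1 : (U 0)⁻¹ * V 0 = 1 := by
      rw [← h]
      exact Matrix.nonsing_inv_mul _ (hdet 0 h0T)
    rw [hftc, h1, sub_self]
end

section
/- Let N ≥ 1, T > 0, and let A, B : [0, T] → Matrix (Fin N) (Fin N) ℂ be continuous. Suppose U, V : [0, T] → Matrix (Fin N) (Fin N) ℂ are differentiable with U′(t) = −A(t) · U(t) and V′(t) = −B(t) · V(t) for all t ∈ [0, T], U(T) = V(T) = Id, and V(t) is invertible for every t ∈ [0, T]. Define w(t) := U(t) · V(t)⁻¹ − Id. Then w is differentiable with w′(t) + A(t) · w(t) − w(t) · B(t) = −(A(t) − B(t)) for all t ∈ [0, T] and w(T) = 0. Moreover, if U(0) = V(0), then w(0) = 0. -/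
open Matrix

attribute [local instance] Matrix.normedAddCommGroup Matrix.normedSpace

/-- Single-curve pseudo-linearization identity: `w := U V⁻¹ - Id` solves the
terminal-value transport problem `w' + A w - w B = -(A - B)`, `w T = 0`, and equal
scattering data `U 0 = V 0` forces `w 0 = 0`. -/
theorem pseudo_linearization_transport_problem
    (N : ℕ) (hN : 1 ≤ N) (T : ℝ) (hT : 0 < T)
    (A B U V : ℝ → Matrix (Fin N) (Fin N) ℂ)
    (hA : ContinuousOn A (Set.Icc 0 T))
    (hB : ContinuousOn B (Set.Icc 0 T))
    (hU : ∀ t ∈ Set.Icc (0 : ℝ) T,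
      HasDerivWithinAt U (-(A t * U t)) (Set.Icc 0 T) t)
    (hV : ∀ t ∈ Set.Icc (0 : ℝ) T,
      HasDerivWithinAt V (-(B t * V t)) (Set.Icc 0 T) t)
    (hUT : U T = 1) (hVT : V T = 1)
    (hVinv : ∀ t ∈ Set.Icc (0 : ℝ) T, IsUnit (V t)) :
    (∀ t ∈ Set.Icc (0 : ℝ) T,
      HasDerivWithinAt (fun s => U s * (V s)⁻¹ - 1)
        (-(A t * (U t * (V t)⁻¹ - 1)) + (U t * (V t)⁻¹ - 1) * B t - (A t - B t))
        (Set.Icc 0 T) t) ∧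
      U T * (V T)⁻¹ - 1 = 0 ∧
      (U 0 = V 0 → U 0 * (V 0)⁻¹ - 1 = 0) := by
  have hVdet : ∀ t ∈ Set.Icc (0 : ℝ) T, IsUnit (V t).det := fun t ht =>
    (Matrix.isUnit_iff_isUnit_det _).mp (hVinv t ht)
  set g : ℝ → Matrix (Fin N) (Fin N) ℂ := fun s => (V s)⁻¹ with hgdef
  have hVg : ∀ t ∈ Set.Icc (0 : ℝ) T, V t * g t = 1 := fun t ht =>
    Matrix.mul_nonsing_inv _ (hVdet t ht)
  have hgV : ∀ t ∈ Set.Icc (0 : ℝ) T, g t * V t = 1 := fun t ht =>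
    Matrix.nonsing_inv_mul _ (hVdet t ht)
  have hVcont : ContinuousOn V (Set.Icc 0 T) := fun t ht => (hV t ht).continuousWithinAt
  have hUcont : ContinuousOn U (Set.Icc 0 T) := fun t ht => (hU t ht).continuousWithinAt
  -- continuity of the pointwise inverse
  have hgcont : ContinuousOn g (Set.Icc 0 T) := by
    have h1 : ContinuousOn (fun s => ((V s).det)⁻¹ • (V s).adjugate) (Set.Icc 0 T) := by
      apply ContinuousOn.fun_smul
      · exact ((continuous_id.matrix_det.comp_continuousOn hVcont)).inv₀
          (fun t ht => (hVdet t ht).ne_zero)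
      · exact continuous_id.matrix_adjugate.comp_continuousOn hVcont
    refine h1.congr (fun s hs => ?_)
    rw [hgdef]
    simp only [Matrix.inv_def, Ring.inverse_eq_inv']
  -- derivative of the pointwise inverse, via slopes
  have hg' : ∀ t ∈ Set.Icc (0 : ℝ) T,
      HasDerivWithinAt g (g t * B t) (Set.Icc 0 T) t := by
    intro t ht
    apply hasDerivWithinAt_iff_tendsto_slope.mpr
    have hVs : Filter.Tendsto (slope V t) (nhdsWithin t (Set.Icc 0 T \ {t}))
        (nhds (-(B t * V t))) := (hasDerivWithinAt_iff_tendsto_slope).mp (hV t ht)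
    have hgs : Filter.Tendsto g (nhdsWithin t (Set.Icc 0 T \ {t})) (nhds (g t)) :=
      (hgcont t ht).mono_left (nhdsWithin_mono _ Set.diff_subset)
    have hlim : Filter.Tendsto (fun s => -(g s * slope V t s * g t))
        (nhdsWithin t (Set.Icc 0 T \ {t})) (nhds (g t * B t)) := by
      have : Filter.Tendsto (fun s => -(g s * slope V t s * g t))
          (nhdsWithin t (Set.Icc 0 T \ {t}))
          (nhds (-(g t * -(B t * V t) * g t))) :=
        ((hgs.mul hVs).mul tendsto_const_nhds).neg
      have heq : -(g t * -(B t * V t) * g t) = g t * B t := by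
        rw [mul_neg, neg_mul, neg_neg, mul_assoc, mul_assoc, hVg t ht, mul_one]
      rwa [heq] at this
    refine hlim.congr' ?_
    filter_upwards [self_mem_nhdsWithin] with s hs
    have hsI : s ∈ Set.Icc (0 : ℝ) T := hs.1
    have key : g s - g t = g s * (V t - V s) * g t := by
      have h1 : g s = g s * (V t * g t) := by rw [hVg t ht, mul_one]
      have h2 : g t = g s * V s * g t := by rw [hgV s hsI, one_mul]
      calc g s - g t = g s * (V t * g t) - g s * V s * g t := by rw [← h1, ← h2]
        _ = g s * (V t - V s) * g t := by noncomm_ring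
    show -(g s * slope V t s * g t) = slope g t s
    rw [slope_def_module, slope_def_module, key, ← neg_sub (V s) (V t),
      mul_neg, neg_mul, smul_neg, Matrix.mul_smul, Matrix.smul_mul]
  -- derivative of U * g, via slopes
  have hUg : ∀ t ∈ Set.Icc (0 : ℝ) T,
      HasDerivWithinAt (fun s => U s * g s)
        (-(A t * U t) * g t + U t * (g t * B t)) (Set.Icc 0 T) t := by
    intro t ht
    apply hasDerivWithinAt_iff_tendsto_slope.mpr
    have hUs : Filter.Tendsto (slope U t) (nhdsWithin t (Set.Icc 0 T \ {t}))
        (nhds (-(A t * U t))) := (hasDerivWithinAt_iff_tendsto_slope).mp (hU t ht)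
    have hgs' : Filter.Tendsto (slope g t) (nhdsWithin t (Set.Icc 0 T \ {t}))
        (nhds (g t * B t)) := (hasDerivWithinAt_iff_tendsto_slope).mp (hg' t ht)
    have hgs : Filter.Tendsto g (nhdsWithin t (Set.Icc 0 T \ {t})) (nhds (g t)) :=
      (hgcont t ht).mono_left (nhdsWithin_mono _ Set.diff_subset)
    have hlim : Filter.Tendsto (fun s => slope U t s * g s + U t * slope g t s)
        (nhdsWithin t (Set.Icc 0 T \ {t}))
        (nhds (-(A t * U t) * g t + U t * (g t * B t))) :=
      (hUs.mul hgs).add (tendsto_const_nhds.mul hgs')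
    refine hlim.congr' ?_
    filter_upwards [self_mem_nhdsWithin] with s _
    show slope U t s * g s + U t * slope g t s = slope (fun s => U s * g s) t s
    rw [slope_def_module, slope_def_module, slope_def_module]
    rw [Matrix.smul_mul, Matrix.mul_smul, ← smul_add]
    congr 1
    noncomm_ring
  refine ⟨?_, ?_, ?_⟩
  · intro t ht
    have hw : HasDerivWithinAt (fun s => U s * g s - 1)
        (-(A t * U t) * g t + U t * (g t * B t)) (Set.Icc 0 T) t :=
      (hUg t ht).sub_const 1
    convert hw using 1
    noncomm_ring
  · rw [hUT, hVT, inv_one, one_mul, sub_self]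
  · intro h0
    have h0I : (0 : ℝ) ∈ Set.Icc (0 : ℝ) T := Set.mem_Icc.mpr ⟨le_refl 0, le_of_lt hT⟩
    rw [h0, hVg 0 h0I, sub_self]
end
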